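/- arXiv:1801.05584 — 5 statements merged into one kernel-verified Lean document; each statement's English description precedes it below -/
import Mathlib

section
/- For all real t with 0 < t < 1, the Bessel function of the first kind of order 1 satisfies 0 < J_1(t) < t/2. -/
/-- Bessel function of the first kind of order 1. -/
noncomputable def besselJ1 (t : ℝ) : ℝ :=
  ∑' p : ℕ, (-1 : ℝ)^p / ((Nat.factorial p : ℝ) * (Nat.factorial (1 + p) : ℝ)) * (t/2)^(1 + 2*p)

theorem besselJ1_bounds (t : ℝ) (h0 : 0 < t) (h1 : t < 1) :
    0 < besselJ1 t ∧ besselJ1 t < t/2 := by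
  set x := t/2 with hxdef
  have hx0 : 0 < x := by positivity
  have hx2 : x < 1/2 := by rw [hxdef]; linarith
  set f : ℕ → ℝ := fun p =>
    (-1 : ℝ)^p / ((Nat.factorial p : ℝ) * (Nat.factorial (1 + p) : ℝ)) * x^(1 + 2*p) with hf
  have hgeo : x^2 < 1 := by nlinarith
  have hgeo0 : (0:ℝ) ≤ x^2 := by positivity
  have habs : ∀ p, |f p| ≤ x * (x^2)^p := by
    intro p
    have hfac : (1:ℝ) ≤ (Nat.factorial p : ℝ) * (Nat.factorial (1 + p) : ℝ) := by
      have h1 : (1:ℝ) ≤ (Nat.factorial p : ℝ) := by exact_mod_cast Nat.one_le_iff_ne_zero.mpr (Nat.factorial_ne_zero p)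
      have h2 : (1:ℝ) ≤ (Nat.factorial (1+p) : ℝ) := by exact_mod_cast Nat.one_le_iff_ne_zero.mpr (Nat.factorial_ne_zero (1+p))
      nlinarith
    have : |f p| = 1 / ((Nat.factorial p : ℝ) * (Nat.factorial (1 + p) : ℝ)) * x^(1+2*p) := by
      rw [hf]
      rw [abs_mul, abs_div, abs_pow, abs_neg, abs_one, one_pow, abs_pow,
        abs_of_pos hx0, abs_of_pos (by positivity : (0:ℝ) < (Nat.factorial p : ℝ) * (Nat.factorial (1 + p) : ℝ))]
    rw [this]
    have hxp : x^(1+2*p) = x * (x^2)^p := by rw [pow_add, pow_mul, pow_one]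
    rw [hxp]
    have h1 : 1 / ((Nat.factorial p : ℝ) * (Nat.factorial (1 + p) : ℝ)) ≤ 1 := by
      rw [div_le_one (by linarith)]; exact hfac
    have h2 : (0:ℝ) ≤ x * (x^2)^p := by positivity
    exact mul_le_of_le_one_left h2 h1
  have hsumgeo : Summable (fun p : ℕ => x * (x^2)^p) :=
    (summable_geometric_of_lt_one hgeo0 hgeo).mul_left x
  have hsf : Summable f := by
    apply Summable.of_norm_bounded hsumgeo
    intro p; exact habs p
  have hsf1 : Summable (fun p => f (p+1)) := (summable_nat_add_iff 1).mpr hsf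
  have hsf2 : Summable (fun p => f (p+2)) := (summable_nat_add_iff 2).mpr hsf
  have hsplit : besselJ1 t = f 0 + (f 1 + ∑' p, f (p+2)) := by
    have e1 : besselJ1 t = ∑' p, f p := rfl
    rw [e1, Summable.tsum_eq_zero_add hsf]
    congr 1
    rw [Summable.tsum_eq_zero_add hsf1]
  have hf0 : f 0 = x := by
    simp [hf, Nat.factorial]
  have hf1 : f 1 = -(x^3)/2 := by
    norm_num [hf, Nat.factorial]
    ring
  -- bound the tail
  have htail : |∑' p, f (p+2)| ≤ x^5 / (1 - x^2) := by
    have hb : ∀ p, |f (p+2)| ≤ x^5 * (x^2)^p := by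
      intro p
      have := habs (p+2)
      calc |f (p+2)| ≤ x * (x^2)^(p+2) := this
        _ = x^5 * (x^2)^p := by ring
    have hsb : Summable (fun p : ℕ => x^5 * (x^2)^p) :=
      (summable_geometric_of_lt_one hgeo0 hgeo).mul_left _
    have hsabs : Summable (fun p => |f (p+2)|) := by
      apply Summable.of_nonneg_of_le (fun p => abs_nonneg _) hb hsb
    have s1 : |∑' p, f (p+2)| ≤ ∑' p, |f (p+2)| := by
      simpa [Real.norm_eq_abs] using
        norm_tsum_le_tsum_norm (f := fun p => f (p+2)) (by simpa [Real.norm_eq_abs] using hsabs)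
    have s2 : ∑' p, |f (p+2)| ≤ ∑' p : ℕ, x^5 * (x^2)^p := Summable.tsum_le_tsum hb hsabs hsb
    have s3 : ∑' p : ℕ, x^5 * (x^2)^p = x^5 / (1 - x^2) := by
      rw [tsum_mul_left, tsum_geometric_of_lt_one hgeo0 hgeo]; ring
    linarith
  have hden : (3:ℝ)/4 ≤ 1 - x^2 := by nlinarith
  have htail3 : |∑' p, f (p+2)| ≤ x^3/3 := by
    refine htail.trans ?_
    rw [div_le_iff₀ (by linarith : (0:ℝ) < 1 - x^2)]
    nlinarith [pow_pos hx0 3, pow_pos hx0 5, sq_nonneg x]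
  obtain ⟨hT1, hT2⟩ := abs_le.mp htail3
  have hx3 : x^3 < x/4 := by nlinarith
  have hx3p : 0 < x^3 := by positivity
  rw [hsplit, hf0, hf1]
  constructor
  · nlinarith
  · nlinarith
end

section
/- For all real t with 0 < t < 1, the spherical Bessel function of order 2 satisfies 0 < j_2(t) < t^2/15. -/
/-- Spherical Bessel function of order 2. -/
noncomputable def sphBesselj2 (t : ℝ) : ℝ :=
  (3/t^3 - 1/t) * Real.sin t - (3/t^2) * Real.cos t

private lemma aux_mono (f f' : ℝ → ℝ) (hf : ∀ x, HasDerivAt f (f' x) x)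
    (hd : ∀ x ∈ Set.Ici (0:ℝ), 0 ≤ f' x) : MonotoneOn f (Set.Ici 0) := by
  apply monotoneOn_of_deriv_nonneg (convex_Ici 0)
  · exact (Continuous.continuousOn (by
      have : Differentiable ℝ f := fun x => (hf x).differentiableAt
      exact this.continuous))
  · intro x hx
    exact (hf x).differentiableAt.differentiableWithinAt
  · intro x hx
    rw [(hf x).deriv]
    rw [interior_Ici] at hx
    exact hd x (Set.mem_Ici.mpr (le_of_lt (Set.mem_Ioi.mp hx)))

private lemma sinA {x : ℝ} (hx : 0 ≤ x) : x - x^3/6 ≤ Real.sin x := by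
  have := aux_mono (fun x => Real.sin x - (x - x^3/6)) (fun x => Real.cos x - (1 - x^2/2))
    (fun x => by
      have h1 := (Real.hasDerivAt_sin x).sub
        (((hasDerivAt_id x).sub (((hasDerivAt_pow 3 x).div_const 6))))
      exact h1.congr_deriv (by norm_num; ring))
    (fun x _ => by nlinarith [Real.one_sub_sq_div_two_le_cos (x := x)])
  have h := this (Set.self_mem_Ici) hx hx
  simp at h; linarith [h]

private lemma cosB0 {x : ℝ} (hx : 0 ≤ x) : Real.cos x ≤ 1 - x^2/2 + x^4/24 := by
  have := aux_mono (fun x => (1 - x^2/2 + x^4/24) - Real.cos x)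
    (fun x => (-x + x^3/6) + Real.sin x)
    (fun x => by
      have h1 := (((hasDerivAt_const x (1:ℝ)).sub ((hasDerivAt_pow 2 x).div_const 2)).add
        ((hasDerivAt_pow 4 x).div_const 24)).sub (Real.hasDerivAt_cos x)
      exact h1.congr_deriv (by norm_num; ring))
    (fun x hx => by have := sinA hx; linarith)
  have h := this (Set.self_mem_Ici) hx hx
  simp at h; linarith [h]

private lemma cosB (x : ℝ) : Real.cos x ≤ 1 - x^2/2 + x^4/24 := by
  rcases le_total 0 x with hx | hx
  · exact cosB0 hx
  · have h := cosB0 (by linarith : (0:ℝ) ≤ -x)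
    rw [Real.cos_neg] at h
    calc Real.cos x ≤ 1 - (-x)^2/2 + (-x)^4/24 := h
    _ = 1 - x^2/2 + x^4/24 := by ring

private lemma sinC {x : ℝ} (hx : 0 ≤ x) : Real.sin x ≤ x - x^3/6 + x^5/120 := by
  have := aux_mono (fun x => (x - x^3/6 + x^5/120) - Real.sin x)
    (fun x => (1 - x^2/2 + x^4/24) - Real.cos x)
    (fun x => by
      have h1 := (((hasDerivAt_id x).sub ((hasDerivAt_pow 3 x).div_const 6)).add
        ((hasDerivAt_pow 5 x).div_const 120)).sub (Real.hasDerivAt_sin x)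
      exact h1.congr_deriv (by norm_num; ring))
    (fun x _ => by have := cosB x; linarith)
  have h := this (Set.self_mem_Ici) hx hx
  simp at h; linarith [h]

private lemma cosD {x : ℝ} (hx : 0 ≤ x) : 1 - x^2/2 + x^4/24 - x^6/720 ≤ Real.cos x := by
  have := aux_mono (fun x => Real.cos x - (1 - x^2/2 + x^4/24 - x^6/720))
    (fun x => (x - x^3/6 + x^5/120) - Real.sin x)
    (fun x => by
      have h1 := (Real.hasDerivAt_cos x).sub
        ((((hasDerivAt_const x (1:ℝ)).sub ((hasDerivAt_pow 2 x).div_const 2)).add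
          ((hasDerivAt_pow 4 x).div_const 24)).sub ((hasDerivAt_pow 6 x).div_const 720))
      exact h1.congr_deriv (by norm_num; ring))
    (fun x hx => by have := sinC hx; linarith)
  have h := this (Set.self_mem_Ici) hx hx
  simp at h; linarith [h]

theorem sphBesselj2_bounds (t : ℝ) (h0 : 0 < t) (h1 : t < 1) :
    0 < sphBesselj2 t ∧ sphBesselj2 t < t^2/15 := by
  have ht3 : (0:ℝ) < t^3 := by positivity
  have hA := sinA h0.le
  have hB := cosB t
  have hC := sinC h0.le
  have hD := cosD h0.le
  have h32 : (0:ℝ) < 3 - t^2 := by nlinarith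
  have key : sphBesselj2 t = ((3 - t^2) * Real.sin t - 3*t*Real.cos t) / t^3 := by
    unfold sphBesselj2; field_simp
  constructor
  · rw [key]
    apply div_pos _ ht3
    nlinarith [mul_le_mul_of_nonneg_left hA h32.le,
      mul_le_mul_of_nonneg_left hB (by positivity : (0:ℝ) ≤ 3*t), pow_pos h0 5]
  · rw [key, div_lt_iff₀ ht3]
    nlinarith [mul_le_mul_of_nonneg_left hC h32.le,
      mul_le_mul_of_nonneg_left hD (by positivity : (0:ℝ) ≤ 3*t), pow_pos h0 7]
end

section
/- For every nonzero z = |z|(cos \alpha, sin \alpha) in R^2 and every k > 0, \int_0^{2\pi} cos(\theta) e^{i k |z| cos(\theta - \alpha)} d\theta = 2\pi i cos(\alpha) J_1(k|z|), where J_1 is the Bessel function of the first kind of order 1. -/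
open Real MeasureTheory

lemma K_even : ∀ m : ℕ, ∫ x in (0:ℝ)..(2*π), Real.cos x ^ (2*m)
    = 2*π*∏ i ∈ Finset.range m, (2*(i:ℝ)+1)/(2*(i:ℝ)+2) := by
  intro m
  induction m with
  | zero => simp
  | succ m ih =>
    have h : 2*(m+1) = 2*m + 2 := by ring
    rw [h, integral_cos_pow, ih, Finset.prod_range_succ]
    simp [Real.sin_two_pi]
    push_cast
    ring

lemma K_odd : ∀ m : ℕ, ∫ x in (0:ℝ)..(2*π), Real.cos x ^ (2*m+1) = 0 := by
  intro m
  induction m with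
  | zero => simp [integral_cos, Real.sin_two_pi]
  | succ m ih =>
    have h : 2*(m+1)+1 = (2*m+1) + 2 := by ring
    rw [h, integral_cos_pow, ih]
    simp [Real.sin_two_pi]

lemma prod_eq (m : ℕ) : (∏ i ∈ Finset.range (m+1), (2*(i:ℝ)+1)/(2*(i:ℝ)+2))
    * (2 * 4^m * (m.factorial : ℝ) * ((m+1).factorial : ℝ)) = ((2*m+1).factorial : ℝ) := by
  induction m with
  | zero => norm_num
  | succ m ih =>
    have h1 : 2*(m+1)+1 = (2*m+1) + 1 + 1 := by ring
    have e1 : (((2*m+1)+1+1).factorial : ℝ)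
        = (2*(m:ℝ)+3)*(2*(m:ℝ)+2)*(((2*m+1)).factorial : ℝ) := by
      rw [Nat.factorial_succ, Nat.factorial_succ]; push_cast; ring
    have e2 : (((m+1)+1).factorial : ℝ) = ((m:ℝ)+2)*(((m+1)).factorial : ℝ) := by
      rw [Nat.factorial_succ]; push_cast; ring
    rw [Finset.prod_range_succ, h1, e1, e2, ← ih]
    have h3 : (2*((m:ℝ)+1)+2) ≠ 0 := by positivity
    field_simp
    have e3 : ((m+1).factorial : ℝ) = ((m:ℝ)+1) * (m.factorial : ℝ) := by
      rw [Nat.factorial_succ]; push_cast; ring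
    rw [e3]
    push_cast
    ring

lemma real_term (ρ : ℝ) (m : ℕ)
    (hp : (∏ i ∈ Finset.range (m+1), (2*(i:ℝ)+1)/(2*(i:ℝ)+2))
      * (2 * 4^m * (m.factorial : ℝ) * ((m+1).factorial : ℝ)) = ((2*m+1).factorial : ℝ)) :
    (-1:ℝ)^m * ρ^(2*m+1) / ((2*m+1).factorial : ℝ)
      * (2*π*∏ i ∈ Finset.range (m+1), (2*(i:ℝ)+1)/(2*(i:ℝ)+2))
    = 2*π*((-1:ℝ)^m/((m.factorial:ℝ)*((1+m).factorial:ℝ))*(ρ/2)^(1+2*m)) := by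
  have hD : (2 * 4^m * (m.factorial : ℝ) * ((m+1).factorial : ℝ)) ≠ 0 := by positivity
  have h2 : (∏ i ∈ Finset.range (m+1), (2*(i:ℝ)+1)/(2*(i:ℝ)+2))
      = ((2*m+1).factorial : ℝ) / (2 * 4^m * (m.factorial : ℝ) * ((m+1).factorial : ℝ)) := by
    rw [eq_div_iff hD]; exact hp
  rw [h2, Nat.add_comm 1 m]
  have h3 : ((2*m+1).factorial : ℝ) ≠ 0 := by positivity
  have h4 : ((m.factorial : ℝ)) ≠ 0 := by positivity
  have h5 : (((m+1).factorial : ℝ)) ≠ 0 := by positivity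
  have h6 : (ρ/2)^(1+2*m) = ρ^(2*m+1) / (2*4^m) := by
    rw [div_pow, Nat.add_comm 1 (2*m)]
    congr 1
    rw [pow_add, pow_mul]
    norm_num
    ring
  rw [h6]
  field_simp

set_option maxHeartbeats 1000000 in
lemma besselJ1_hasSum (t : ℝ) :
    HasSum (fun p : ℕ => (-1 : ℝ)^p / ((Nat.factorial p : ℝ) * (Nat.factorial (1 + p) : ℝ))
      * (t/2)^(1 + 2*p)) (besselJ1 t) := by
  have hb : ∀ p : ℕ, ‖(-1 : ℝ)^p / ((Nat.factorial p : ℝ) * (Nat.factorial (1 + p) : ℝ))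
      * (t/2)^(1 + 2*p)‖ ≤ |t/2| * (((t/2)^2)^p / (Nat.factorial p : ℝ)) := by
    intro p
    have h1 : ‖(-1 : ℝ)^p / ((Nat.factorial p : ℝ) * (Nat.factorial (1 + p) : ℝ))
        * (t/2)^(1 + 2*p)‖
        = |t/2|^(1+2*p) / ((Nat.factorial p : ℝ) * (Nat.factorial (1 + p) : ℝ)) := by
      rw [norm_mul, norm_div, norm_pow, norm_pow, norm_neg, norm_one, one_pow]
      rw [Real.norm_eq_abs (((Nat.factorial p : ℝ) * (Nat.factorial (1 + p) : ℝ))), abs_of_pos]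
      · rw [Real.norm_eq_abs]; ring
      · positivity
    rw [h1]
    have h2 : |t/2|^(1+2*p) = |t/2| * ((t/2)^2)^p := by
      rw [pow_add, pow_mul, pow_one, sq_abs]
    rw [h2, mul_div_assoc]
    apply mul_le_mul_of_nonneg_left _ (abs_nonneg _)
    apply div_le_div_of_nonneg_left (by positivity) (by positivity)
    calc (Nat.factorial p : ℝ) = (Nat.factorial p : ℝ) * 1 := by ring
      _ ≤ (Nat.factorial p : ℝ) * (Nat.factorial (1 + p) : ℝ) := by
          apply mul_le_mul_of_nonneg_left _ (by positivity)
          exact_mod_cast Nat.one_le_iff_ne_zero.2 (Nat.factorial_ne_zero _)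
  have hs : Summable (fun p : ℕ => (-1 : ℝ)^p / ((Nat.factorial p : ℝ)
      * (Nat.factorial (1 + p) : ℝ)) * (t/2)^(1 + 2*p)) :=
    Summable.of_norm (Summable.of_nonneg_of_le (fun p => norm_nonneg _) hb
      ((Real.summable_pow_div_factorial ((t/2)^2)).mul_left _))
  exact hs.hasSum

lemma sin_int (ρ : ℝ) : (∫ φ in (0:ℝ)..(2*π),
    (Real.sin φ : ℂ) * Complex.exp (Complex.I * (ρ * Real.cos φ))) = 0 := by
  have h := intervalIntegral.integral_comp_sub_left (a := (0:ℝ)) (b := 2*π)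
    (fun φ => (Real.sin φ : ℂ) * Complex.exp (Complex.I * (ρ * Real.cos φ))) (2*π)
  have h2 : ∀ x : ℝ, (Real.sin (2*π - x) : ℂ)
      * Complex.exp (Complex.I * (ρ * Real.cos (2*π - x)))
      = -((Real.sin x : ℂ) * Complex.exp (Complex.I * (ρ * Real.cos x))) := by
    intro x
    rw [Real.sin_sub, Real.cos_sub]
    simp [Real.sin_two_pi, Real.cos_two_pi]
  simp only [h2, sub_self, sub_zero, intervalIntegral.integral_neg] at h
  linear_combination (-(1:ℂ)/2) * h

lemma swap_hasSum (ρ : ℝ) :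
    HasSum (fun n : ℕ => ((Complex.I * ρ)^n / (Nat.factorial n : ℂ))
        * ((∫ φ in (0:ℝ)..(2*π), Real.cos φ ^ (n+1) : ℝ) : ℂ))
      (∫ φ in (0:ℝ)..(2*π), (Real.cos φ : ℂ) * Complex.exp (Complex.I * (ρ * Real.cos φ))) := by
  set F : ℕ → ℝ → ℂ := fun n φ => ((Complex.I * ρ)^n / (Nat.factorial n : ℂ))
    * (Real.cos φ : ℂ)^(n+1) with hF
  have hpt : ∀ φ : ℝ, HasSum (fun n => F n φ)
      ((Real.cos φ : ℂ) * Complex.exp (Complex.I * (ρ * Real.cos φ))) := by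
    intro φ
    have h := (NormedSpace.expSeries_div_hasSum_exp
      (Complex.I * (ρ * Real.cos φ))).mul_left (Real.cos φ : ℂ)
    rw [← Complex.exp_eq_exp_ℂ] at h
    convert h using 2 with n
    · rfl
    rw [hF]
    simp only
    rw [show Complex.I * ((ρ:ℂ) * (Real.cos φ : ℂ)) = (Complex.I * ρ) * (Real.cos φ : ℂ) by ring,
      mul_pow]
    ring
  have hcont : ∀ n : ℕ, Continuous (F n) := by
    intro n; fun_prop
  have hF_int : ∀ n : ℕ, IntegrableOn (F n) (Set.Ioc 0 (2*π)) volume :=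
    fun n => (hcont n).integrableOn_Ioc
  have hF_sum : Summable (fun n : ℕ => ∫ φ in Set.Ioc 0 (2*π), ‖F n φ‖) := by
    refine Summable.of_nonneg_of_le (fun n => integral_nonneg (fun φ => norm_nonneg _))
      (fun n => ?_) ((Real.summable_pow_div_factorial |ρ|).mul_left (2*π))
    ·
      have hle : ∀ φ : ℝ, ‖F n φ‖ ≤ |ρ|^n / (Nat.factorial n : ℝ) := by
        intro φ
        rw [hF]
        simp only
        rw [norm_mul, norm_div, norm_pow, norm_mul, Complex.norm_I, one_mul, norm_pow]
        rw [Complex.norm_real, Complex.norm_natCast, Complex.norm_real]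
        have h1 : ‖Real.cos φ‖^(n+1) ≤ 1 :=
          pow_le_one₀ (norm_nonneg _) (by rw [Real.norm_eq_abs]; exact Real.abs_cos_le_one φ)
        calc ‖ρ‖^n / (Nat.factorial n : ℝ) * ‖Real.cos φ‖^(n+1)
            ≤ ‖ρ‖^n / (Nat.factorial n : ℝ) * 1 :=
              mul_le_mul_of_nonneg_left h1 (by positivity)
          _ = |ρ|^n / (Nat.factorial n : ℝ) := by rw [mul_one, Real.norm_eq_abs]
      calc (∫ φ in Set.Ioc 0 (2*π), ‖F n φ‖)
          ≤ ∫ _ in Set.Ioc (0:ℝ) (2*π), (|ρ|^n / (Nat.factorial n : ℝ)) := by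
            apply integral_mono (hF_int n).norm
            · exact integrableOn_const (measure_Ioc_lt_top).ne
            · exact fun φ => hle φ
        _ = (2*π) * (|ρ|^n / (Nat.factorial n : ℝ)) := by
            rw [setIntegral_const, Real.volume_real_Ioc, smul_eq_mul, sub_zero,
              max_eq_left (by positivity)]
  have h := hasSum_integral_of_summable_integral_norm hF_int hF_sum
  have heq : (∫ φ in Set.Ioc 0 (2*π), ∑' n, F n φ)
      = ∫ φ in Set.Ioc 0 (2*π), (Real.cos φ : ℂ) * Complex.exp (Complex.I * (ρ * Real.cos φ)) :=
    integral_congr_ae (Filter.Eventually.of_forall fun φ => (hpt φ).tsum_eq)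
  rw [heq] at h
  have h2π : (0:ℝ) ≤ 2*π := by positivity
  rw [intervalIntegral.integral_of_le h2π]
  convert h using 2 with n
  · rfl
  rw [← intervalIntegral.integral_of_le h2π, hF]
  simp only
  rw [intervalIntegral.integral_const_mul]
  congr 1
  rw [← intervalIntegral.integral_ofReal]
  congr 1 with φ
  push_cast
  ring

lemma main_int (ρ : ℝ) :
    (∫ φ in (0:ℝ)..(2*π), (Real.cos φ : ℂ) * Complex.exp (Complex.I * (ρ * Real.cos φ)))
      = 2*π*Complex.I*((besselJ1 ρ : ℝ) : ℂ) := by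
  have hswap := swap_hasSum ρ
  set c : ℕ → ℂ := fun n => ((Complex.I * ρ)^n / (Nat.factorial n : ℂ))
    * ((∫ φ in (0:ℝ)..(2*π), Real.cos φ ^ (n+1) : ℝ) : ℂ) with hc
  have hg : Function.Injective (fun m : ℕ => 2*m+1) := by
    intro a b hab; dsimp only at hab; omega
  have h0 : ∀ n ∉ Set.range (fun m : ℕ => 2*m+1), c n = 0 := by
    intro n hn
    have hev : Even n := by
      rcases Nat.even_or_odd n with h | h
      · exact h
      · obtain ⟨q, hq⟩ := h
        exact absurd ⟨q, hq.symm⟩ hn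
    obtain ⟨q, hq⟩ := hev
    have hq1 : n + 1 = 2*q + 1 := by omega
    rw [hc]
    simp only
    rw [hq1, K_odd q]
    simp
  have hodd := (hg.hasSum_iff h0).2 hswap
  have hterm : ∀ m : ℕ, c (2*m+1) = 2*π*Complex.I
      * (((-1:ℝ)^m / ((m.factorial:ℝ) * (((1+m).factorial):ℝ)) * (ρ/2)^(1+2*m) : ℝ) : ℂ) := by
    intro m
    rw [hc]
    simp only
    have e1 : 2*m+1+1 = 2*(m+1) := by ring
    rw [e1, K_even (m+1)]
    have e2 : (Complex.I*(ρ:ℂ))^(2*m+1)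
        = ((-1:ℝ)^m : ℂ) * Complex.I * ((ρ^(2*m+1) : ℝ) : ℂ) := by
      rw [mul_pow, pow_succ, pow_mul, Complex.I_sq]
      push_cast
      ring
    rw [e2]
    rw [show (2:ℂ)*π*Complex.I
        * (((-1:ℝ)^m / ((m.factorial:ℝ) * (((1+m).factorial):ℝ)) * (ρ/2)^(1+2*m) : ℝ) : ℂ)
      = Complex.I * ((2*π*((-1:ℝ)^m/((m.factorial:ℝ)*(((1+m).factorial):ℝ))
          *(ρ/2)^(1+2*m)) : ℝ) : ℂ) by push_cast; ring]
    rw [← real_term ρ m (prod_eq m)]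
    push_cast
    ring
  have hJc := (Complex.hasSum_ofReal.2 (besselJ1_hasSum ρ)).mul_left (2*π*Complex.I)
  have hcg : (c ∘ fun m : ℕ => 2*m+1) = fun m : ℕ => 2*π*Complex.I
      * (((-1:ℝ)^m / ((m.factorial:ℝ) * (((1+m).factorial):ℝ)) * (ρ/2)^(1+2*m) : ℝ) : ℂ) := by
    funext m; exact hterm m
  rw [hcg] at hodd
  exact hodd.unique hJc

theorem circle_integral_cos_exp (z : ℝ × ℝ) (hz : z ≠ 0) (α k : ℝ) (hk : 0 < k)
    (hzα : z = (‖z‖ * Real.cos α, ‖z‖ * Real.sin α)) :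
    ∫ θ in (0:ℝ)..(2*π),
        (Real.cos θ : ℂ) * Complex.exp (Complex.I * (k * ‖z‖ * Real.cos (θ - α)))
      = 2 * π * Complex.I * (Real.cos α : ℂ) * (besselJ1 (k * ‖z‖) : ℝ) := by
  set ρ : ℝ := k * ‖z‖ with hρ
  set f : ℝ → ℂ := fun θ => (Real.cos θ : ℂ) * Complex.exp (Complex.I * (ρ * Real.cos (θ - α)))
    with hf
  have hper : Function.Periodic f (2*π) := by
    intro x
    rw [hf]
    simp only
    rw [Real.cos_add_two_pi, show x + 2*π - α = (x - α) + 2*π by ring, Real.cos_add_two_pi]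
  have step1 : (∫ θ in (0:ℝ)..(2*π), f θ) = ∫ θ in α..(α + 2*π), f θ := by
    have := hper.intervalIntegral_add_eq 0 α
    rwa [zero_add] at this
  have step2 : (∫ θ in α..(α + 2*π), f θ) = ∫ x in (0:ℝ)..(2*π), f (x + α) := by
    rw [intervalIntegral.integral_comp_add_right f α, zero_add, add_comm α (2*π)]
  have hfx : ∀ x : ℝ, f (x + α) = (Real.cos α : ℂ)
        * ((Real.cos x : ℂ) * Complex.exp (Complex.I * (ρ * Real.cos x)))
      - (Real.sin α : ℂ)
        * ((Real.sin x : ℂ) * Complex.exp (Complex.I * (ρ * Real.cos x))) := by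
    intro x
    rw [hf]
    simp only
    rw [add_sub_cancel_right, Real.cos_add]
    push_cast
    ring
  have hint1 : IntervalIntegrable (fun x : ℝ => (Real.cos α : ℂ)
      * ((Real.cos x : ℂ) * Complex.exp (Complex.I * (ρ * Real.cos x)))) volume 0 (2*π) := by
    apply Continuous.intervalIntegrable; fun_prop
  have hint2 : IntervalIntegrable (fun x : ℝ => (Real.sin α : ℂ)
      * ((Real.sin x : ℂ) * Complex.exp (Complex.I * (ρ * Real.cos x)))) volume 0 (2*π) := by
    apply Continuous.intervalIntegrable; fun_prop
  have step3 : (∫ x in (0:ℝ)..(2*π), f (x + α))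
      = (Real.cos α : ℂ) * (∫ x in (0:ℝ)..(2*π),
          (Real.cos x : ℂ) * Complex.exp (Complex.I * (ρ * Real.cos x)))
        - (Real.sin α : ℂ) * (∫ x in (0:ℝ)..(2*π),
          (Real.sin x : ℂ) * Complex.exp (Complex.I * (ρ * Real.cos x))) := by
    rw [intervalIntegral.integral_congr (g := fun x => (Real.cos α : ℂ)
        * ((Real.cos x : ℂ) * Complex.exp (Complex.I * (ρ * Real.cos x)))
      - (Real.sin α : ℂ)
        * ((Real.sin x : ℂ) * Complex.exp (Complex.I * (ρ * Real.cos x))))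
      (fun x _ => hfx x)]
    rw [intervalIntegral.integral_sub hint1 hint2,
      intervalIntegral.integral_const_mul, intervalIntegral.integral_const_mul]
  have : (∫ θ in (0:ℝ)..(2*π), f θ) = 2 * π * Complex.I * (Real.cos α : ℂ)
      * ((besselJ1 ρ : ℝ) : ℂ) := by
    rw [step1, step2, step3, main_int ρ, sin_int ρ]
    ring
  calc ∫ θ in (0:ℝ)..(2*π),
        (Real.cos θ : ℂ) * Complex.exp (Complex.I * (k * ‖z‖ * Real.cos (θ - α)))
      = ∫ θ in (0:ℝ)..(2*π), f θ := by
        refine intervalIntegral.integral_congr fun θ _ => ?_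
        rw [hf]; simp only [hρ]; push_cast; ring
    _ = 2 * π * Complex.I * (Real.cos α : ℂ) * ((besselJ1 ρ : ℝ) : ℂ) := this
end

section
/- For every nonzero z in R^3 and every k > 0, \int_{S^2} d_3 e^{i k d\cdot z} ds(d) = 4\pi i j_1(k|z|) cos(\alpha), where d = (d_1,d_2,d_3) \in S^2, \alpha is the polar angle of z (so cos \alpha = z_3/|z|), and j_1 is the spherical Bessel function of order 1. -/
open Real MeasureTheory

/-- Spherical Bessel function of order 1. -/
noncomputable def sphBesselj1 (t : ℝ) : ℝ := Real.sin t / t^2 - Real.cos t / t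

section SphereIntegralAux

open intervalIntegral Finset

local notation "fa" => Nat.factorial




noncomputable def Wcos (j : ℕ) : ℝ := ∫ x in (0:ℝ)..(2*π), Real.cos x ^ j

noncomputable def Vint (m c : ℕ) : ℝ := ∫ u in (-1:ℝ)..(1:ℝ), u^(2*c) * (1 - u^2)^m

lemma Wcos_rec (n : ℕ) : Wcos (n+2) = (n+1)/(n+2) * Wcos n := by
  unfold Wcos
  rw [integral_cos_pow]
  simp [Real.sin_two_pi]

lemma Wcos_odd (m : ℕ) : Wcos (2*m+1) = 0 := by
  induction m with
  | zero => simp [Wcos, Real.sin_two_pi]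
  | succ k ih =>
      have h : 2*(k+1)+1 = (2*k+1)+2 := by ring
      rw [h, Wcos_rec, ih, mul_zero]

lemma Wcos_even (m : ℕ) : Wcos (2*m) = 2*π*(fa (2*m)) / (4^m * (fa m)^2) := by
  induction m with
  | zero => simp [Wcos]
  | succ k ih =>
      have h : 2*(k+1) = (2*k)+2 := by ring
      rw [h, Wcos_rec, show (2*k)+2 = 2*(k+1) by ring, ih]
      have e1 : ((fa (2*(k+1)) : ℝ)) = (2*k+2) * ((2*k+1) * (fa (2*k))) := by
        rw [show 2*(k+1) = (2*k+1)+1 by ring, Nat.factorial_succ, Nat.factorial_succ]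
        push_cast; ring
      have e2 : ((fa (k+1) : ℝ)) = (k+1) * fa k := by
        rw [Nat.factorial_succ]; push_cast; ring
      rw [e1, e2]
      have h2 : ((fa (2*k)) : ℝ) ≠ 0 := Nat.cast_ne_zero.mpr (Nat.factorial_ne_zero _)
      have h3 : ((fa k) : ℝ) ≠ 0 := Nat.cast_ne_zero.mpr (Nat.factorial_ne_zero _)
      have h4 : (4:ℝ)^k ≠ 0 := by positivity
      push_cast
      field_simp
      ring

lemma Vint_zero (c : ℕ) : Vint 0 c = 2/(2*c+1) := by
  have h : ((-1:ℝ))^(2*c+1) = -1 := Odd.neg_one_pow ⟨c, by ring⟩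
  simp only [Vint, pow_zero, mul_one, integral_pow, one_pow, h]
  push_cast
  ring

lemma Vint_succ (m c : ℕ) : Vint (m+1) c = Vint m c - Vint m (c+1) := by
  unfold Vint
  rw [← intervalIntegral.integral_sub (by apply Continuous.intervalIntegrable; fun_prop)
    (by apply Continuous.intervalIntegrable; fun_prop)]
  congr 1; ext u; ring

lemma Vint_eq (m : ℕ) : ∀ c : ℕ, Vint m c
    = 2^(2*m+1) * (fa (2*c)) * (fa m) * (fa (c+m)) / ((fa c) * (fa (2*c+2*m+1))) := by
  induction m with
  | zero =>
      intro c
      rw [Vint_zero]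
      have e : ((fa (2*c+2*0+1)) : ℝ) = (2*c+1) * fa (2*c) := by
        rw [show 2*c+2*0+1 = (2*c)+1 by ring, Nat.factorial_succ]; push_cast; ring
      rw [e]
      have h2 : ((fa (2*c)) : ℝ) ≠ 0 := Nat.cast_ne_zero.mpr (Nat.factorial_ne_zero _)
      have h3 : ((fa c) : ℝ) ≠ 0 := Nat.cast_ne_zero.mpr (Nat.factorial_ne_zero _)
      simp only [Nat.add_zero, Nat.factorial, Nat.cast_one]
      push_cast
      field_simp
  | succ k ih =>
      intro c
      rw [Vint_succ, ih, ih]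
      have hA : ((fa (2*(c+1))) : ℝ) = (2*c+2)*((2*c+1)*(fa (2*c))) := by
        rw [show 2*(c+1) = ((2*c)+1)+1 by ring, Nat.factorial_succ, Nat.factorial_succ]
        push_cast; ring
      have hB : ((fa (c+1+k)) : ℝ) = (c+k+1)*(fa (c+k)) := by
        rw [show c+1+k = (c+k)+1 by ring, Nat.factorial_succ]; push_cast; ring
      have hC : ((fa (c+1)) : ℝ) = (c+1)*(fa c) := by
        rw [Nat.factorial_succ]; push_cast; ring
      have hD : ((fa (2*(c+1)+2*k+1)) : ℝ) = (2*c+2*k+3)*((2*c+2*k+2)*(fa (2*c+2*k+1))) := by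
        rw [show 2*(c+1)+2*k+1 = ((2*c+2*k+1)+1)+1 by ring, Nat.factorial_succ,
          Nat.factorial_succ]
        push_cast; ring
      have hE : ((fa (k+1)) : ℝ) = (k+1)*(fa k) := by
        rw [Nat.factorial_succ]; push_cast; ring
      have hF : ((fa (c+(k+1))) : ℝ) = (c+k+1)*(fa (c+k)) := by
        rw [show c+(k+1) = (c+k)+1 by ring, Nat.factorial_succ]; push_cast; ring
      have hG : ((fa (2*c+2*(k+1)+1)) : ℝ) = (2*c+2*k+3)*((2*c+2*k+2)*(fa (2*c+2*k+1))) := by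
        rw [show 2*c+2*(k+1)+1 = ((2*c+2*k+1)+1)+1 by ring, Nat.factorial_succ,
          Nat.factorial_succ]
        push_cast; ring
      rw [hA, hB, hC, hD, hE, hF, hG]
      have h1 : ((fa (2*c+2*k+1)) : ℝ) ≠ 0 := Nat.cast_ne_zero.mpr (Nat.factorial_ne_zero _)
      have h2 : ((fa (2*c)) : ℝ) ≠ 0 := Nat.cast_ne_zero.mpr (Nat.factorial_ne_zero _)
      have h3 : ((fa c) : ℝ) ≠ 0 := Nat.cast_ne_zero.mpr (Nat.factorial_ne_zero _)
      have h4 : ((fa k) : ℝ) ≠ 0 := Nat.cast_ne_zero.mpr (Nat.factorial_ne_zero _)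
      have h5 : ((fa (c+k)) : ℝ) ≠ 0 := Nat.cast_ne_zero.mpr (Nat.factorial_ne_zero _)
      push_cast
      field_simp
      ring


-- odd moment over symmetric interval vanishes
lemma odd_moment (q m : ℕ) : (∫ u in (-1:ℝ)..(1:ℝ), u^(2*q+1) * (1 - u^2)^m) = 0 := by
  have h := intervalIntegral.integral_comp_neg (a := (-1:ℝ)) (b := 1)
    (fun u : ℝ => u^(2*q+1) * (1 - u^2)^m)
  simp only [neg_neg] at h
  have h2 : ∀ u : ℝ, (-u)^(2*q+1) * (1 - (-u)^2)^m = -(u^(2*q+1) * (1 - u^2)^m) := by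
    intro u
    rw [show ((-u):ℝ)^2 = u^2 by ring, Odd.neg_pow ⟨q, by ring⟩]
    ring
  rw [intervalIntegral.integral_congr (g := fun u : ℝ => -(u^(2*q+1) * (1 - u^2)^m))
    (fun u _ => h2 u), intervalIntegral.integral_neg] at h
  linarith [h]

lemma sin_cos_int (m q : ℕ) :
    (∫ x in (0:ℝ)..π, Real.sin x ^ (2*m+1) * Real.cos x ^ q)
      = ∫ u in (-1:ℝ)..(1:ℝ), u^q * (1 - u^2)^m := by
  rw [integral_sin_pow_odd_mul_cos_pow]
  rw [Real.cos_pi, Real.cos_zero]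

lemma keyid (m d : ℕ) :
    ((2*(m+d)+1).choose (2*m) : ℝ) * (2*π*(fa (2*m)) / (4^m * (fa m)^2))
      * (2^(2*(m:ℕ)+1) * (fa (2*(d+1))) * (fa m) * (fa ((d+1)+m))
          / ((fa (d+1)) * (fa (2*(d+1)+2*m+1))))
    = 4*π/(2*(m+d)+3) * ((m+d).choose m) := by
  have hc1 : ((2*(m+d)+1).choose (2*m) : ℝ)
      = (fa (2*(m+d)+1)) / ((fa (2*m)) * (fa (2*d+1))) := by
    rw [Nat.cast_choose ℝ (by omega : 2*m ≤ 2*(m+d)+1),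
      show 2*(m+d)+1-2*m = 2*d+1 from by omega]
  have hc2 : (((m+d).choose m) : ℝ) = (fa (m+d)) / ((fa m) * (fa d)) := by
    rw [Nat.cast_choose ℝ (by omega : m ≤ m+d), show m+d-m = d from by omega]
  rw [hc1, hc2]
  have hA : ((fa (2*(d+1))) : ℝ) = (2*d+2)*(fa (2*d+1)) := by
    rw [show 2*(d+1) = (2*d+1)+1 by ring, Nat.factorial_succ]; push_cast; ring
  have hB : ((fa ((d+1)+m)) : ℝ) = (m+d+1)*(fa (m+d)) := by
    rw [show (d+1)+m = (m+d)+1 by ring, Nat.factorial_succ]; push_cast; ring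
  have hC : ((fa (d+1)) : ℝ) = (d+1)*(fa d) := by
    rw [Nat.factorial_succ]; push_cast; ring
  have hD : ((fa (2*(d+1)+2*m+1)) : ℝ)
      = (2*(m+d)+3)*((2*(m+d)+2)*(fa (2*(m+d)+1))) := by
    rw [show 2*(d+1)+2*m+1 = ((2*(m+d)+1)+1)+1 by ring, Nat.factorial_succ,
      Nat.factorial_succ]
    push_cast; ring
  rw [hA, hB, hC, hD]
  have h1 : ((fa (2*(m+d)+1)) : ℝ) ≠ 0 := Nat.cast_ne_zero.mpr (Nat.factorial_ne_zero _)
  have h2 : ((fa (2*m)) : ℝ) ≠ 0 := Nat.cast_ne_zero.mpr (Nat.factorial_ne_zero _)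
  have h3 : ((fa (2*d+1)) : ℝ) ≠ 0 := Nat.cast_ne_zero.mpr (Nat.factorial_ne_zero _)
  have h4 : ((fa m) : ℝ) ≠ 0 := Nat.cast_ne_zero.mpr (Nat.factorial_ne_zero _)
  have h5 : ((fa d) : ℝ) ≠ 0 := Nat.cast_ne_zero.mpr (Nat.factorial_ne_zero _)
  have h6 : ((fa (m+d)) : ℝ) ≠ 0 := Nat.cast_ne_zero.mpr (Nat.factorial_ne_zero _)
  have h7 : (4:ℝ)^m ≠ 0 := by positivity
  have h8 : (2:ℝ)^(2*m+1) = 2 * 4^m := by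
    rw [pow_succ, pow_mul]; norm_num; ring
  rw [h8]
  push_cast
  field_simp
  ring

lemma sum_range_even_odd (f : ℕ → ℝ) (n : ℕ) :
    ∑ j ∈ Finset.range (2*n), f j
      = (∑ m ∈ Finset.range n, f (2*m)) + ∑ m ∈ Finset.range n, f (2*m+1) := by
  induction n with
  | zero => simp
  | succ k ih =>
      rw [show 2*(k+1) = (2*k+1)+1 by ring]
      rw [Finset.sum_range_succ, Finset.sum_range_succ, Finset.sum_range_succ,
        Finset.sum_range_succ, ih]
      ring


noncomputable def Pfun (x y : ℝ) (n : ℕ) (θ : ℝ) : ℝ :=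
  ∫ t in (0:ℝ)..(2*π), (x * Real.sin θ * Real.cos t + y * Real.cos θ)^n

lemma Pfun_eq (x y : ℝ) (n : ℕ) (θ : ℝ) :
    Pfun x y n θ = ∑ j ∈ Finset.range (n+1),
      ((x * Real.sin θ)^j * (y * Real.cos θ)^(n-j) * (n.choose j : ℝ)) * Wcos j := by
  unfold Pfun Wcos
  rw [intervalIntegral.integral_congr
    (g := fun t => ∑ j ∈ Finset.range (n+1),
      ((x * Real.sin θ)^j * (y * Real.cos θ)^(n-j) * (n.choose j : ℝ)) * Real.cos t^j)
    (fun t _ => by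
      rw [add_pow]
      exact Finset.sum_congr rfl fun j _ => by ring)]
  rw [intervalIntegral.integral_finset_sum
    (fun j _ => by apply Continuous.intervalIntegrable; fun_prop)]
  exact Finset.sum_congr rfl fun j _ => intervalIntegral.integral_const_mul _ _

lemma Pfun_cont (x y : ℝ) (n : ℕ) : Continuous (fun θ => Pfun x y n θ) := by
  have : (fun θ => Pfun x y n θ) = fun θ => ∑ j ∈ Finset.range (n+1),
      ((x * Real.sin θ)^j * (y * Real.cos θ)^(n-j) * (n.choose j : ℝ)) * Wcos j := by
    funext θ; exact Pfun_eq x y n θ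
  rw [this]
  apply continuous_finset_sum
  intro j _
  fun_prop

lemma Pfun_bound (x y : ℝ) (n : ℕ) (θ : ℝ) : |Pfun x y n θ| ≤ 2*π*(|x|+|y|)^n := by
  have h : ∀ t ∈ Set.uIoc (0:ℝ) (2*π),
      ‖(x * Real.sin θ * Real.cos t + y * Real.cos θ)^n‖ ≤ (|x|+|y|)^n := by
    intro t _
    rw [Real.norm_eq_abs, abs_pow]
    apply pow_le_pow_left₀ (abs_nonneg _)
    calc |x * Real.sin θ * Real.cos t + y * Real.cos θ|
        ≤ |x * Real.sin θ * Real.cos t| + |y * Real.cos θ| := abs_add_le _ _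
      _ ≤ |x| + |y| := by
          rw [abs_mul, abs_mul, abs_mul]
          have h1 : |Real.sin θ| * |Real.cos t| ≤ 1 := by
            calc |Real.sin θ| * |Real.cos t| ≤ 1 * 1 :=
                  mul_le_mul (Real.abs_sin_le_one θ) (Real.abs_cos_le_one t)
                    (abs_nonneg _) zero_le_one
              _ = 1 := by ring
          have hxs : |x| * |Real.sin θ| * |Real.cos t| ≤ |x| := by
            rw [mul_assoc]
            exact mul_le_of_le_one_right (abs_nonneg x) h1
          have hyc : |y| * |Real.cos θ| ≤ |y| :=
            mul_le_of_le_one_right (abs_nonneg y) (Real.abs_cos_le_one θ)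
          linarith
  have := intervalIntegral.norm_integral_le_of_norm_le_const h
  rw [Real.norm_eq_abs] at this
  calc |Pfun x y n θ| ≤ (|x|+|y|)^n * |2*π - 0| := this
    _ = 2*π*(|x|+|y|)^n := by
        rw [sub_zero, abs_of_nonneg (by positivity : (0:ℝ) ≤ 2*π)]; ring

noncomputable def Qfun (x y : ℝ) (n : ℕ) : ℝ :=
  ∫ θ in (0:ℝ)..π, Real.cos θ * Real.sin θ * Pfun x y n θ

lemma Qfun_eq (x y : ℝ) (n : ℕ) :
    Qfun x y n = ∑ j ∈ Finset.range (n+1),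
      (x^j * y^(n-j) * (n.choose j : ℝ) * Wcos j)
        * (∫ θ in (0:ℝ)..π, Real.sin θ^(j+1) * Real.cos θ^(n-j+1)) := by
  unfold Qfun
  rw [intervalIntegral.integral_congr
    (g := fun θ => ∑ j ∈ Finset.range (n+1),
      (x^j * y^(n-j) * (n.choose j : ℝ) * Wcos j)
        * (Real.sin θ^(j+1) * Real.cos θ^(n-j+1)))
    (fun θ _ => by
      rw [Pfun_eq, Finset.mul_sum]
      exact Finset.sum_congr rfl fun j _ => by ring)]
  rw [intervalIntegral.integral_finset_sum
    (fun j _ => by apply Continuous.intervalIntegrable; fun_prop)]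
  exact Finset.sum_congr rfl fun j _ => intervalIntegral.integral_const_mul _ _

lemma Qfun_even (x y : ℝ) (s : ℕ) : Qfun x y (2*s) = 0 := by
  rw [Qfun_eq]
  apply Finset.sum_eq_zero
  intro j hj
  rw [Finset.mem_range] at hj
  rcases Nat.even_or_odd j with ⟨m, hm⟩ | ⟨m, hm⟩
  · subst hm
    have hms : m + m ≤ 2*s := by omega
    rw [show m+m+1 = 2*m+1 from by ring, sin_cos_int m (2*s-(m+m)+1),
      show 2*s-(m+m)+1 = 2*(s-m)+1 from by omega, odd_moment, mul_zero]
  · subst hm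
    rw [Wcos_odd, mul_zero, zero_mul]

lemma term_eval (s m : ℕ) (hm : m ≤ s) :
    ((2*s+1).choose (2*m) : ℝ) * Wcos (2*m) * Vint m (s-m+1)
      = 4*π/(2*s+3) * ((s.choose m) : ℝ) := by
  have h := keyid m (s-m)
  rw [show m + (s-m) = s from by omega] at h
  rw [Nat.cast_sub hm] at h
  rw [show 2*((m:ℝ)+((s:ℝ)-(m:ℝ)))+3 = 2*(s:ℝ)+3 from by ring] at h
  rw [Wcos_even, Vint_eq]
  exact h

lemma Qfun_odd (x y : ℝ) (s : ℕ) :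
    Qfun x y (2*s+1) = 4*π*y*(x^2+y^2)^s/(2*s+3) := by
  rw [Qfun_eq, show (2*s+1)+1 = 2*(s+1) from by ring, sum_range_even_odd]
  have hodd : (∑ m ∈ Finset.range (s+1),
      (x^(2*m+1) * y^(2*s+1-(2*m+1)) * ((2*s+1).choose (2*m+1) : ℝ) * Wcos (2*m+1))
        * (∫ θ in (0:ℝ)..π, Real.sin θ^((2*m+1)+1) * Real.cos θ^(2*s+1-(2*m+1)+1))) = 0 := by
    apply Finset.sum_eq_zero
    intro m _
    rw [Wcos_odd, mul_zero, zero_mul]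
  rw [hodd, add_zero]
  have heven : ∀ m ∈ Finset.range (s+1),
      (x^(2*m) * y^(2*s+1-2*m) * ((2*s+1).choose (2*m) : ℝ) * Wcos (2*m))
        * (∫ θ in (0:ℝ)..π, Real.sin θ^(2*m+1) * Real.cos θ^(2*s+1-2*m+1))
      = (4*π/(2*s+3)) * (y * ((x^2)^m * (y^2)^(s-m) * ((s.choose m) : ℝ))) := by
    intro m hm
    rw [Finset.mem_range] at hm
    have hms : m ≤ s := by omega
    rw [sin_cos_int m (2*s+1-2*m+1), show 2*s+1-2*m+1 = 2*(s-m+1) from by omega]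
    have hv : (∫ u in (-1:ℝ)..(1:ℝ), u^(2*(s-m+1)) * (1 - u^2)^m) = Vint m (s-m+1) := rfl
    rw [hv]
    have := term_eval s m hms
    have hy : y^(2*s+1-2*m) = (y^2)^(s-m) * y := by
      rw [show 2*s+1-2*m = 2*(s-m)+1 from by omega, pow_succ, pow_mul]
    have hx : x^(2*m) = (x^2)^m := by rw [pow_mul]
    rw [hy, hx]
    calc (x^2)^m * ((y^2)^(s-m) * y) * ((2*s+1).choose (2*m) : ℝ) * Wcos (2*m)
          * Vint m (s-m+1)
        = ((x^2)^m * ((y^2)^(s-m) * y))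
            * (((2*s+1).choose (2*m) : ℝ) * Wcos (2*m) * Vint m (s-m+1)) := by ring
      _ = ((x^2)^m * ((y^2)^(s-m) * y)) * (4*π/(2*s+3) * ((s.choose m) : ℝ)) := by rw [this]
      _ = (4*π/(2*s+3)) * (y * ((x^2)^m * (y^2)^(s-m) * ((s.choose m) : ℝ))) := by ring
  rw [Finset.sum_congr rfl heven, ← Finset.mul_sum, ← Finset.mul_sum, ← add_pow]
  push_cast
  ring




lemma cexp_tsum (w : ℂ) : Complex.exp w = ∑' n : ℕ, w^n / (Nat.factorial n) := by
  rw [Complex.exp_eq_exp_ℂ, NormedSpace.exp_eq_tsum_div]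

lemma integral_tsum_of_bound {f : ℕ → ℝ → ℂ} {a b : ℝ} (hab : a ≤ b)
    (hf : ∀ n, Continuous (f n)) {C : ℕ → ℝ} (hC : Summable C)
    (hbound : ∀ n x, ‖f n x‖ ≤ C n) :
    (∫ x in a..b, (∑' n, f n x)) = ∑' n, ∫ x in a..b, f n x := by
  have hm : ∀ n : ℕ, AEStronglyMeasurable (f n) (volume.restrict (Set.Ioc a b)) :=
    fun n => (hf n).aestronglyMeasurable
  have hC0 : ∀ n, 0 ≤ C n := fun n => le_trans (norm_nonneg _) (hbound n a)
  have key : (∑' n : ℕ, ∫⁻ x in Set.Ioc a b, ‖f n x‖₊ ∂volume) ≠ ⊤ := by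
    have hle : ∀ n : ℕ, (∫⁻ x in Set.Ioc a b, ‖f n x‖₊ ∂volume)
        ≤ ENNReal.ofReal (C n) * ENNReal.ofReal (b - a) := by
      intro n
      calc (∫⁻ x in Set.Ioc a b, (‖f n x‖₊ : ENNReal) ∂volume)
          ≤ ∫⁻ _x in Set.Ioc a b, ENNReal.ofReal (C n) ∂volume := by
            apply lintegral_mono
            intro x
            simp only [← enorm_eq_nnnorm, ← ofReal_norm]
            exact ENNReal.ofReal_le_ofReal (hbound n x)
        _ = ENNReal.ofReal (C n) * ENNReal.ofReal (b - a) := by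
            rw [MeasureTheory.lintegral_const, Measure.restrict_apply_univ, Real.volume_Ioc]
    apply ne_top_of_le_ne_top ?_ (ENNReal.tsum_le_tsum hle)
    rw [ENNReal.tsum_mul_right]
    exact ENNReal.mul_ne_top
      (by rw [← ENNReal.ofReal_tsum_of_nonneg hC0 hC]; exact ENNReal.ofReal_ne_top)
      ENNReal.ofReal_ne_top
  rw [intervalIntegral.integral_of_le hab]
  simp_rw [intervalIntegral.integral_of_le hab]
  exact MeasureTheory.integral_tsum hm key

lemma phi_shift (x y e : ℝ) :
    (∫ t in (0:ℝ)..(2*π), Complex.exp (Complex.I * ((x*Real.cos t + y*Real.sin t + e : ℝ) : ℂ)))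
      = ∫ t in (0:ℝ)..(2*π),
          Complex.exp (Complex.I * ((Real.sqrt (x^2+y^2)*Real.cos t + e : ℝ) : ℂ)) := by
  rcases eq_or_ne (Real.sqrt (x^2+y^2)) 0 with hr | hr
  · have h0 : x^2 + y^2 = 0 := by
      have h1 := Real.sqrt_eq_zero'.mp hr
      nlinarith [sq_nonneg x, sq_nonneg y]
    have hx : x = 0 := by nlinarith [sq_nonneg x, sq_nonneg y]
    have hy : y = 0 := by nlinarith [sq_nonneg x, sq_nonneg y]
    rw [hr, hx, hy]
    simp
  · set r := Real.sqrt (x^2+y^2) with hrdef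
    have hrpos : 0 < r := lt_of_le_of_ne (Real.sqrt_nonneg _) (Ne.symm hr)
    have habs : ‖(x:ℂ) + y*Complex.I‖ = r := by
      rw [Complex.norm_def, Complex.normSq_add_mul_I]
    have hzne : (x : ℂ) + y*Complex.I ≠ 0 := by
      intro h0
      rw [h0, norm_zero] at habs
      exact hr habs.symm
    set ψ := Complex.arg ((x:ℂ) + y*Complex.I) with hψ
    have hcos : Real.cos ψ = x / r := by
      rw [hψ, Complex.cos_arg hzne, habs]
      simp
    have hsin : Real.sin ψ = y / r := by
      rw [hψ, Complex.sin_arg, habs]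
      simp
    have hpt : ∀ t : ℝ, x*Real.cos t + y*Real.sin t + e = r*Real.cos (t - ψ) + e := by
      intro t
      rw [Real.cos_sub, hcos, hsin]
      field_simp
    simp_rw [hpt]
    rw [intervalIntegral.integral_comp_sub_right
      (fun t => Complex.exp (Complex.I * ((r*Real.cos t + e : ℝ):ℂ))) ψ]
    have hper : Function.Periodic
        (fun t => Complex.exp (Complex.I * ((r*Real.cos t + e : ℝ):ℂ))) (2*π) := by
      intro t
      simp [Real.cos_add_two_pi]
    have hh := hper.intervalIntegral_add_eq (-ψ) 0
    rw [show (0:ℝ) - ψ = -ψ from by ring, show (2*π - ψ) = -ψ + 2*π from by ring]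
    simpa using hh

lemma inner_series (a e : ℝ) :
    (∫ t in (0:ℝ)..(2*π), Complex.exp (Complex.I * ((a*Real.cos t + e : ℝ):ℂ)))
      = ∑' n : ℕ, Complex.I^n / (Nat.factorial n)
          * (((∫ t in (0:ℝ)..(2*π), (a*Real.cos t + e)^n) : ℝ) : ℂ) := by
  have hpt : ∀ t : ℝ, Complex.exp (Complex.I * ((a*Real.cos t + e : ℝ):ℂ))
      = ∑' n : ℕ, Complex.I^n / (Nat.factorial n) * ((((a*Real.cos t + e)^n : ℝ)) : ℂ) := by
    intro t
    rw [cexp_tsum]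
    congr 1
    funext n
    rw [mul_pow]
    push_cast
    ring
  simp_rw [hpt]
  rw [integral_tsum_of_bound (by positivity)
    (fun n => by fun_prop)
    (Real.summable_pow_div_factorial (|a|+|e|))
    (fun n t => by
      have h1 : |a*Real.cos t + e| ≤ |a| + |e| := by
        calc |a*Real.cos t + e| ≤ |a*Real.cos t| + |e| := abs_add_le _ _
          _ ≤ |a| + |e| := by
              rw [abs_mul]
              have := mul_le_of_le_one_right (abs_nonneg a) (Real.abs_cos_le_one t)
              linarith
      have h2 : ‖Complex.I^n / (Nat.factorial n : ℂ)
          * ((((a*Real.cos t + e)^n : ℝ)) : ℂ)‖ = |a*Real.cos t + e|^n / (Nat.factorial n) := by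
        rw [norm_mul, norm_div, norm_pow, Complex.norm_I, one_pow, Complex.norm_real,
          Real.norm_eq_abs, abs_pow]
        simp [Complex.norm_natCast]
        ring
      rw [h2]
      gcongr)]
  · congr 1
    funext n
    rw [intervalIntegral.integral_const_mul, intervalIntegral.integral_ofReal]


lemma Qfun_bound (x y : ℝ) (n : ℕ) : |Qfun x y n| ≤ 2*π^2*(|x|+|y|)^n := by
  have h : ∀ θ ∈ Set.uIoc (0:ℝ) π,
      ‖Real.cos θ * Real.sin θ * Pfun x y n θ‖ ≤ 2*π*(|x|+|y|)^n := by
    intro θ _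
    rw [Real.norm_eq_abs, abs_mul, abs_mul]
    have h1 : |Real.cos θ| * |Real.sin θ| ≤ 1 :=
      calc |Real.cos θ| * |Real.sin θ| ≤ 1 * 1 :=
            mul_le_mul (Real.abs_cos_le_one θ) (Real.abs_sin_le_one θ) (abs_nonneg _) zero_le_one
        _ = 1 := by ring
    calc |Real.cos θ| * |Real.sin θ| * |Pfun x y n θ|
        ≤ 1 * |Pfun x y n θ| := by
          apply mul_le_mul_of_nonneg_right h1 (abs_nonneg _)
      _ = |Pfun x y n θ| := by ring
      _ ≤ 2*π*(|x|+|y|)^n := Pfun_bound x y n θ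
  have := intervalIntegral.norm_integral_le_of_norm_le_const h
  rw [Real.norm_eq_abs] at this
  calc |Qfun x y n| ≤ (2*π*(|x|+|y|)^n) * |π - 0| := this
    _ = 2*π^2*(|x|+|y|)^n := by
        rw [sub_zero, abs_of_nonneg Real.pi_pos.le]; ring

lemma outer_series (x y : ℝ) :
    (∫ θ in (0:ℝ)..π, ((Real.cos θ : ℂ) * (Real.sin θ : ℂ))
        * (∑' n : ℕ, Complex.I^n / (Nat.factorial n) * ((Pfun x y n θ : ℝ) : ℂ)))
      = ∑' n : ℕ, Complex.I^n / (Nat.factorial n) * ((Qfun x y n : ℝ) : ℂ) := by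
  have hpt : ∀ θ : ℝ, ((Real.cos θ : ℂ) * (Real.sin θ : ℂ))
        * (∑' n : ℕ, Complex.I^n / (Nat.factorial n) * ((Pfun x y n θ : ℝ) : ℂ))
      = ∑' n : ℕ, Complex.I^n / (Nat.factorial n)
          * (((Real.cos θ * Real.sin θ * Pfun x y n θ : ℝ)) : ℂ) := by
    intro θ
    rw [← tsum_mul_left]
    congr 1
    funext n
    push_cast
    ring
  simp_rw [hpt]
  rw [integral_tsum_of_bound Real.pi_pos.le
    (fun n => by
      apply Continuous.mul continuous_const
      exact Complex.continuous_ofReal.comp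
        ((Real.continuous_cos.mul Real.continuous_sin).mul (Pfun_cont x y n)))
    (((Real.summable_pow_div_factorial (|x|+|y|)).mul_left (2*π^2)))
    (fun n θ => by
      have h2 : ‖Complex.I^n / (Nat.factorial n : ℂ)
          * (((Real.cos θ * Real.sin θ * Pfun x y n θ : ℝ)) : ℂ)‖
          = |Real.cos θ * Real.sin θ * Pfun x y n θ| / (Nat.factorial n) := by
        rw [norm_mul, norm_div, norm_pow, Complex.norm_I, one_pow, Complex.norm_real,
          Real.norm_eq_abs]
        simp [Complex.norm_natCast]
        ring
      rw [h2]
      have h3 : |Real.cos θ * Real.sin θ * Pfun x y n θ| ≤ 2*π^2*(|x|+|y|)^n := by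
        rw [abs_mul, abs_mul]
        have h1 : |Real.cos θ| * |Real.sin θ| ≤ 1 :=
          calc |Real.cos θ| * |Real.sin θ| ≤ 1 * 1 :=
                mul_le_mul (Real.abs_cos_le_one θ) (Real.abs_sin_le_one θ)
                  (abs_nonneg _) zero_le_one
            _ = 1 := by ring
        calc |Real.cos θ| * |Real.sin θ| * |Pfun x y n θ|
            ≤ 1 * |Pfun x y n θ| := mul_le_mul_of_nonneg_right h1 (abs_nonneg _)
          _ = |Pfun x y n θ| := by ring
          _ ≤ 2*π*(|x|+|y|)^n := Pfun_bound x y n θ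
          _ ≤ 2*π^2*(|x|+|y|)^n := by
              have hππ : π ≤ π^2 := by nlinarith [Real.pi_gt_three]
              gcongr
      calc |Real.cos θ * Real.sin θ * Pfun x y n θ| / (Nat.factorial n)
          ≤ (2*π^2*(|x|+|y|)^n) / (Nat.factorial n) := by
            gcongr
        _ = 2*π^2 * ((|x|+|y|)^n / (Nat.factorial n)) := by ring)]
  congr 1
  funext n
  rw [intervalIntegral.integral_const_mul, intervalIntegral.integral_ofReal]
  rfl

lemma besselj1_hasSum {t : ℝ} (ht : t ≠ 0) :
    HasSum (fun s : ℕ => (-1)^s * t^(2*s+1) / ((Nat.factorial (2*s+1)) * (2*s+3)))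
      (Real.sin t / t^2 - Real.cos t / t) := by
  have hs := Real.hasSum_sin t
  have hc := (Real.hasSum_cos t).mul_left t
  have hd := hs.sub hc
  set f : ℕ → ℝ := fun n => (-1)^n * t^(2*n+1) / (Nat.factorial (2*n+1))
      - t * ((-1)^n * t^(2*n) / (Nat.factorial (2*n))) with hf
  have hd2 : HasSum (fun n => f (n+1))
      ((Real.sin t - t * Real.cos t) - ∑ i ∈ Finset.range 1, f i) :=
    (hasSum_nat_add_iff' 1).mpr hd
  have hf0 : ∑ i ∈ Finset.range 1, f i = 0 := by
    simp [hf, Nat.factorial]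
  rw [hf0, sub_zero] at hd2
  have hterm : ∀ n : ℕ, f (n+1) = t^2 * ((-1)^n * t^(2*n+1)
      / ((Nat.factorial (2*n+1)) * (2*n+3))) := by
    intro n
    simp only [hf]
    have e1 : (Nat.factorial (2*(n+1)+1) : ℝ)
        = (2*n+3) * ((2*n+2) * (Nat.factorial (2*n+1))) := by
      rw [show 2*(n+1)+1 = ((2*n+1)+1)+1 from by ring, Nat.factorial_succ, Nat.factorial_succ]
      push_cast; ring
    have e2 : (Nat.factorial (2*(n+1)) : ℝ) = (2*n+2) * (Nat.factorial (2*n+1)) := by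
      rw [show 2*(n+1) = (2*n+1)+1 from by ring, Nat.factorial_succ]
      push_cast; ring
    rw [e1, e2]
    have h1 : ((Nat.factorial (2*n+1)) : ℝ) ≠ 0 :=
      Nat.cast_ne_zero.mpr (Nat.factorial_ne_zero _)
    have h2 : (2*(n:ℝ)+2) ≠ 0 := by positivity
    have h3 : (2*(n:ℝ)+3) ≠ 0 := by positivity
    field_simp
    ring
  have hd3 : HasSum (fun n : ℕ => t^2 * ((-1)^n * t^(2*n+1)
      / ((Nat.factorial (2*n+1)) * (2*n+3)))) (Real.sin t - t * Real.cos t) := by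
    have := hd2
    rwa [show (fun n => f (n+1)) = (fun n : ℕ => t^2 * ((-1)^n * t^(2*n+1)
      / ((Nat.factorial (2*n+1)) * (2*n+3)))) from funext hterm] at this
  have hd4 := hd3.div_const (t^2)
  have ht2 : (t:ℝ)^2 ≠ 0 := pow_ne_zero _ ht
  have hgoal : (fun n : ℕ => t^2 * ((-1)^n * t^(2*n+1)
      / ((Nat.factorial (2*n+1)) * (2*n+3))) / t^2)
      = fun s : ℕ => (-1)^s * t^(2*s+1) / ((Nat.factorial (2*s+1)) * (2*s+3)) := by
    funext s
    field_simp
  rw [hgoal] at hd4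
  have hval : (Real.sin t - t * Real.cos t) / t^2 = Real.sin t / t^2 - Real.cos t / t := by
    field_simp
  rwa [hval] at hd4


end SphereIntegralAux

set_option maxHeartbeats 1000000 in
/-- Integral of `d₃ e^{i k d·z}` over the unit sphere `S²` equals
`4π i j₁(k|z|) cos α`, where `cos α = z₃/|z|`. -/
theorem sphere_integral_d3_exp (z : EuclideanSpace ℝ (Fin 3)) (hz : z ≠ 0)
    (k : ℝ) (hk : 0 < k) (α : ℝ) (hα : Real.cos α = z 2 / ‖z‖) :
    (∫ θ in (0:ℝ)..π, ∫ φ in (0:ℝ)..(2*π),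
        (Real.cos θ : ℂ) * Complex.exp (Complex.I * (k * (Real.sin θ * Real.cos φ * z 0
          + Real.sin θ * Real.sin φ * z 1 + Real.cos θ * z 2))) * (Real.sin θ : ℂ))
      = 4 * π * Complex.I * (sphBesselj1 (k * ‖z‖) : ℝ) * (Real.cos α : ℝ) := by
  have hρ0 : (0:ℝ) ≤ Real.sqrt ((z 0)^2 + (z 1)^2) := Real.sqrt_nonneg _
  set ρ : ℝ := Real.sqrt ((z 0)^2 + (z 1)^2) with hρdef
  have hρsq : ρ^2 = (z 0)^2 + (z 1)^2 := Real.sq_sqrt (by positivity)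
  have hR0 : 0 < ‖z‖ := norm_pos_iff.mpr hz
  have hRsq : ‖z‖^2 = (z 0)^2 + (z 1)^2 + (z 2)^2 := by
    have h := EuclideanSpace.norm_eq z
    rw [Fin.sum_univ_three] at h
    rw [h, Real.sq_sqrt (by positivity)]
    simp [Real.norm_eq_abs, sq_abs]
  have hsum : ρ^2 + (z 2)^2 = ‖z‖^2 := by rw [hρsq, hRsq]
  set x : ℝ := k * ρ with hx
  set y : ℝ := k * (z 2) with hy
  have hxy : x^2 + y^2 = (k*‖z‖)^2 := by
    rw [hx, hy]
    linear_combination k^2 * hsum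
  have stepA : (∫ θ in (0:ℝ)..π, ∫ φ in (0:ℝ)..(2*π),
        (Real.cos θ : ℂ) * Complex.exp (Complex.I * (k * (Real.sin θ * Real.cos φ * z 0
          + Real.sin θ * Real.sin φ * z 1 + Real.cos θ * z 2))) * (Real.sin θ : ℂ))
      = ∫ θ in (0:ℝ)..π, ((Real.cos θ : ℂ) * (Real.sin θ : ℂ))
          * (∑' n : ℕ, Complex.I^n / (Nat.factorial n) * ((Pfun x y n θ : ℝ) : ℂ)) := by
    apply intervalIntegral.integral_congr
    intro θ hθ
    rw [Set.uIcc_of_le Real.pi_pos.le] at hθ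
    have hθs : 0 ≤ Real.sin θ := Real.sin_nonneg_of_nonneg_of_le_pi hθ.1 hθ.2
    have hxs : 0 ≤ x * Real.sin θ :=
      mul_nonneg (mul_nonneg hk.le hρ0) hθs
    have hsq : (k*(z 0)*Real.sin θ)^2 + (k*(z 1)*Real.sin θ)^2 = (x*Real.sin θ)^2 := by
      rw [hx]
      linear_combination (-(k^2)*Real.sin θ^2) * hρsq
    have hsqrt : Real.sqrt ((k*(z 0)*Real.sin θ)^2 + (k*(z 1)*Real.sin θ)^2)
        = x*Real.sin θ := by
      rw [hsq, Real.sqrt_sq hxs]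
    calc (∫ φ in (0:ℝ)..(2*π),
        (Real.cos θ : ℂ) * Complex.exp (Complex.I * (k * (Real.sin θ * Real.cos φ * z 0
          + Real.sin θ * Real.sin φ * z 1 + Real.cos θ * z 2))) * (Real.sin θ : ℂ))
        = ∫ φ in (0:ℝ)..(2*π), ((Real.cos θ : ℂ) * (Real.sin θ : ℂ))
            * Complex.exp (Complex.I * (((k*(z 0)*Real.sin θ)*Real.cos φ
                + (k*(z 1)*Real.sin θ)*Real.sin φ + y*Real.cos θ : ℝ) : ℂ)) := by
          apply intervalIntegral.integral_congr
          intro φ _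
          dsimp only
          have hAB : Complex.I * (k * (Real.sin θ * Real.cos φ * z 0
              + Real.sin θ * Real.sin φ * z 1 + Real.cos θ * z 2))
              = Complex.I * (((k*(z 0)*Real.sin θ)*Real.cos φ
                + (k*(z 1)*Real.sin θ)*Real.sin φ + y*Real.cos θ : ℝ) : ℂ) := by
            rw [hy]
            push_cast
            ring
          rw [hAB]
          ring
      _ = ((Real.cos θ : ℂ) * (Real.sin θ : ℂ))
            * ∫ φ in (0:ℝ)..(2*π), Complex.exp (Complex.I * (((k*(z 0)*Real.sin θ)*Real.cos φ
                + (k*(z 1)*Real.sin θ)*Real.sin φ + y*Real.cos θ : ℝ) : ℂ)) :=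
          intervalIntegral.integral_const_mul _ _
      _ = ((Real.cos θ : ℂ) * (Real.sin θ : ℂ))
            * ∫ φ in (0:ℝ)..(2*π), Complex.exp (Complex.I
                * ((Real.sqrt ((k*(z 0)*Real.sin θ)^2 + (k*(z 1)*Real.sin θ)^2)*Real.cos φ
                    + y*Real.cos θ : ℝ) : ℂ)) := by
          rw [phi_shift]
      _ = ((Real.cos θ : ℂ) * (Real.sin θ : ℂ))
            * ∫ φ in (0:ℝ)..(2*π), Complex.exp (Complex.I
                * (((x*Real.sin θ)*Real.cos φ + y*Real.cos θ : ℝ) : ℂ)) := by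
          rw [hsqrt]
      _ = ((Real.cos θ : ℂ) * (Real.sin θ : ℂ))
            * ∑' n : ℕ, Complex.I^n / (Nat.factorial n) * ((Pfun x y n θ : ℝ) : ℂ) := by
          rw [inner_series]
          rfl
  rw [stepA, outer_series]
  -- summability of the coefficient series
  have hnormf : ∀ n : ℕ, ‖Complex.I^n / (Nat.factorial n : ℂ) * ((Qfun x y n : ℝ) : ℂ)‖
      ≤ 2*π^2 * ((|x|+|y|)^n / (Nat.factorial n)) := by
    intro n
    have h2 : ‖Complex.I^n / (Nat.factorial n : ℂ) * ((Qfun x y n : ℝ) : ℂ)‖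
        = |Qfun x y n| / (Nat.factorial n) := by
      rw [norm_mul, norm_div, norm_pow, Complex.norm_I, one_pow, Complex.norm_real,
        Real.norm_eq_abs]
      simp [Complex.norm_natCast]
      ring
    rw [h2]
    calc |Qfun x y n| / (Nat.factorial n)
        ≤ (2*π^2*(|x|+|y|)^n) / (Nat.factorial n) := by
          gcongr
          exact Qfun_bound x y n
      _ = 2*π^2 * ((|x|+|y|)^n / (Nat.factorial n)) := by ring
  have hfs : Summable (fun n : ℕ => Complex.I^n / (Nat.factorial n : ℂ)
      * ((Qfun x y n : ℝ) : ℂ)) :=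
    Summable.of_norm_bounded
      ((Real.summable_pow_div_factorial (|x|+|y|)).mul_left (2*π^2)) hnormf
  have he : Summable (fun s : ℕ => Complex.I^(2*s) / (Nat.factorial (2*s) : ℂ)
      * ((Qfun x y (2*s) : ℝ) : ℂ)) :=
    hfs.comp_injective (fun a b h => by omega)
  have ho : Summable (fun s : ℕ => Complex.I^(2*s+1) / (Nat.factorial (2*s+1) : ℂ)
      * ((Qfun x y (2*s+1) : ℝ) : ℂ)) :=
    hfs.comp_injective (fun a b h => by omega)
  rw [← tsum_even_add_odd he ho]
  have heven : (∑' s : ℕ, Complex.I^(2*s) / (Nat.factorial (2*s) : ℂ)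
      * ((Qfun x y (2*s) : ℝ) : ℂ)) = 0 := by
    rw [tsum_congr (fun s => by rw [Qfun_even]; simp : ∀ s : ℕ,
      Complex.I^(2*s) / (Nat.factorial (2*s) : ℂ) * ((Qfun x y (2*s) : ℝ) : ℂ) = 0)]
    exact tsum_zero
  rw [heven, zero_add]
  have ht0 : k * ‖z‖ ≠ 0 := by positivity
  have hodd : ∀ s : ℕ, Complex.I^(2*s+1) / (Nat.factorial (2*s+1) : ℂ)
      * ((Qfun x y (2*s+1) : ℝ) : ℂ)
      = (4*(π:ℂ)*Complex.I*(z 2)/(‖z‖:ℝ))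
          * ((((-1:ℝ))^s * (k*‖z‖)^(2*s+1)
              / ((Nat.factorial (2*s+1)) * (2*s+3)) : ℝ) : ℂ) := by
    intro s
    rw [Qfun_odd, hxy, hy]
    have hI : Complex.I^(2*s+1) = (-1 : ℂ)^s * Complex.I := by
      rw [pow_succ, pow_mul, Complex.I_sq]
    rw [hI]
    have hfac' : ((Nat.factorial (2*s+1)) : ℂ) ≠ 0 :=
      Nat.cast_ne_zero.mpr (Nat.factorial_ne_zero _)
    have hs3 : (2*(s:ℂ)+3) ≠ 0 := by
      have h1 : ((2*s+3 : ℕ) : ℂ) ≠ 0 := Nat.cast_ne_zero.mpr (by omega)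
      have h2 : ((2*s+3 : ℕ) : ℂ) = 2*(s:ℂ)+3 := by push_cast; ring
      rwa [h2] at h1
    have hz2 : ((‖z‖:ℝ) : ℂ) ≠ 0 := Complex.ofReal_ne_zero.mpr hR0.ne'
    push_cast
    field_simp
    ring
  rw [tsum_congr hodd, tsum_mul_left, ← Complex.ofReal_tsum,
    (besselj1_hasSum ht0).tsum_eq]
  rw [hα]
  simp only [sphBesselj1]
  push_cast
  field_simp
end

section
/- For 0 < t < 1, j_0(t) + j_2(t) < 1 - t^2/10 + t^4/120 < 1, where j_0(t) = sin(t)/t and j_2(t) = (3/t^3 - 1/t) sin t - (3/t^2) cos t are spherical Bessel functions of orders 0 and 2. -/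
open Real

private lemma aux_pos {f f' : ℝ → ℝ} (hf : ∀ y, HasDerivAt f (f' y) y)
    (h0 : f 0 = 0) (hd : ∀ y, 0 < y → 0 < f' y) {x : ℝ} (hx : 0 < x) : 0 < f x := by
  have hmono : StrictMonoOn f (Set.Ici 0) := by
    apply strictMonoOn_of_deriv_pos (convex_Ici 0)
      (fun y _ => (hf y).continuousAt.continuousWithinAt)
    intro y hy
    rw [interior_Ici] at hy
    rw [(hf y).deriv]
    exact hd y hy
  have := hmono (by simp : (0:ℝ) ∈ Set.Ici 0) (le_of_lt hx) hx
  rwa [h0] at this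

private lemma sin_gt (x : ℝ) (hx : 0 < x) : x - x^3/6 < Real.sin x := by
  have := aux_pos (f := fun y => Real.sin y - (y - y^3/6))
    (f' := fun y => Real.cos y - (1 - y^2/2))
    (fun y => by
      have h1 : HasDerivAt (fun y : ℝ => y - y^3/6) (1 - y^2/2) y := by
        have := ((hasDerivAt_id y).sub (((hasDerivAt_pow 3 y)).div_const 6))
        exact this.congr_deriv (by ring)
      exact (Real.hasDerivAt_sin y).sub h1)
    (by norm_num)
    (fun y hy => by
      have := Real.one_sub_sq_div_two_lt_cos (x := y) (ne_of_gt hy)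
      linarith) hx
  linarith

private lemma cos_lt (x : ℝ) (hx : 0 < x) : Real.cos x < 1 - x^2/2 + x^4/24 := by
  have := aux_pos (f := fun y => (1 - y^2/2 + y^4/24) - Real.cos y)
    (f' := fun y => (-y + y^3/6) - (-Real.sin y))
    (fun y => by
      have h1 : HasDerivAt (fun y : ℝ => 1 - y^2/2 + y^4/24) (-y + y^3/6) y := by
        have := ((hasDerivAt_const y (1:ℝ)).sub ((hasDerivAt_pow 2 y).div_const 2)).add
          ((hasDerivAt_pow 4 y).div_const 24)
        exact this.congr_deriv (by ring)
      exact h1.sub (Real.hasDerivAt_cos y))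
    (by norm_num)
    (fun y hy => by have := sin_gt y hy; linarith) hx
  linarith

private lemma sin_lt5 (x : ℝ) (hx : 0 < x) : Real.sin x < x - x^3/6 + x^5/120 := by
  have := aux_pos (f := fun y => (y - y^3/6 + y^5/120) - Real.sin y)
    (f' := fun y => (1 - y^2/2 + y^4/24) - Real.cos y)
    (fun y => by
      have h1 : HasDerivAt (fun y : ℝ => y - y^3/6 + y^5/120) (1 - y^2/2 + y^4/24) y := by
        have := ((hasDerivAt_id y).sub ((hasDerivAt_pow 3 y).div_const 6)).add
          ((hasDerivAt_pow 5 y).div_const 120)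
        exact this.congr_deriv (by ring)
      exact h1.sub (Real.hasDerivAt_sin y))
    (by norm_num)
    (fun y hy => by have := cos_lt y hy; linarith) hx
  linarith

private lemma cos_gt6 (x : ℝ) (hx : 0 < x) : 1 - x^2/2 + x^4/24 - x^6/720 < Real.cos x := by
  have := aux_pos (f := fun y => Real.cos y - (1 - y^2/2 + y^4/24 - y^6/720))
    (f' := fun y => -Real.sin y - (-y + y^3/6 - y^5/120))
    (fun y => by
      have h1 : HasDerivAt (fun y : ℝ => 1 - y^2/2 + y^4/24 - y^6/720) (-y + y^3/6 - y^5/120) y := by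
        have := (((hasDerivAt_const y (1:ℝ)).sub ((hasDerivAt_pow 2 y).div_const 2)).add
          ((hasDerivAt_pow 4 y).div_const 24)).sub ((hasDerivAt_pow 6 y).div_const 720)
        exact this.congr_deriv (by ring)
      exact (Real.hasDerivAt_cos y).sub h1)
    (by norm_num)
    (fun y hy => by have := sin_lt5 y hy; linarith) hx
  linarith

/-- Spherical Bessel function of order 0. -/
noncomputable def sphBesselj0 (t : ℝ) : ℝ := Real.sin t / t

theorem sphBesselj0_add_j2_lt (t : ℝ) (h0 : 0 < t) (h1 : t < 1) :
    sphBesselj0 t + sphBesselj2 t < 1 - t^2/10 + t^4/120 ∧ 1 - t^2/10 + t^4/120 < 1 := by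
  have ht : t ≠ 0 := ne_of_gt h0
  have key : sphBesselj0 t + sphBesselj2 t = (3 * Real.sin t - 3 * t * Real.cos t) / t^3 := by
    unfold sphBesselj0 sphBesselj2
    field_simp
    ring
  constructor
  · rw [key, div_lt_iff₀ (by positivity)]
    have hs := sin_lt5 t h0
    have hc := cos_gt6 t h0
    nlinarith [pow_pos h0 7, pow_pos h0 5, pow_pos h0 3, mul_pos h0 h0]
  · have h2 : t^2 < 1 := by nlinarith
    have h3 : 0 < t^2 := by positivity
    nlinarith
end
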